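/- Let 0 < α ≤ 1 and c ∈ ℝ. Then every f ∈ X_{c,loc} belongs to the domain of the Hadamard-type fractional integral J^α_{0+,c}, i.e. ∫_0^x u^{c-1}(log(x/u))^{α-1}|f(u)| du < ∞ for a.e. x > 0. -/

import Mathlib

open MeasureTheory Set

def memDomJ (α c : ℝ) (f : ℝ → ℂ) : Prop :=
  ∀ᵐ x ∂(volume.restrict (Set.Ioi (0 : ℝ))),
    (∫⁻ u in Set.Ioo (0 : ℝ) x,
      ENNReal.ofReal (u ^ (c - 1) * Real.log (x / u) ^ (α - 1) * ‖f u‖)) < ⊤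

def memXloc (c : ℝ) (f : ℝ → ℂ) : Prop :=
  ∀ a : ℝ, 0 < a →
    IntegrableOn (fun x : ℝ => x ^ (c - 1) * ‖f x‖) (Set.Ioo 0 a)

/-- The key kernel bound: for `0 < u < x ≤ a`, `log(x/u)^(α-1) ≤ a^(1-α) * (x-u)^(α-1)`. -/
lemma log_rpow_bound {α a u x : ℝ} (hα1 : α ≤ 1) (hu : 0 < u) (hux : u < x) (hxa : x ≤ a) :
    Real.log (x / u) ^ (α - 1) ≤ a ^ (1 - α) * (x - u) ^ (α - 1) := by
  have hx : 0 < x := hu.trans hux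
  have ha : 0 < a := hx.trans_le hxa
  have hxu : 0 < x - u := by linarith
  have hlog : (x - u) / a ≤ Real.log (x / u) := by
    have h2 : Real.log (u / x) ≤ u / x - 1 := Real.log_le_sub_one_of_pos (by positivity)
    have h3 : Real.log (x / u) = -(Real.log (u / x)) := by
      rw [Real.log_div hx.ne' hu.ne', Real.log_div hu.ne' hx.ne']; ring
    have h4 : (x - u) / x ≤ 1 - u / x := by
      rw [sub_div, div_self hx.ne']
    have h5 : (x - u) / a ≤ (x - u) / x := by gcongr
    linarith
  have h6 : Real.log (x / u) ^ (α - 1) ≤ ((x - u) / a) ^ (α - 1) :=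
    Real.rpow_le_rpow_of_nonpos (by positivity) hlog (by linarith)
  calc Real.log (x / u) ^ (α - 1) ≤ ((x - u) / a) ^ (α - 1) := h6
    _ = (x - u) ^ (α - 1) / a ^ (α - 1) := Real.div_rpow hxu.le ha.le _
    _ = a ^ (1 - α) * (x - u) ^ (α - 1) := by
        rw [show (1 - α) = -(α - 1) by ring, Real.rpow_neg ha.le]
        rw [div_eq_mul_inv, mul_comm]

/-- `∫⁻ x in Ioo u a, (x-u)^(α-1) ≤ a^α / α` for `0 < α`, `0 ≤ u ≤ a`. -/
lemma lintegral_rpow_shift_le {α a u : ℝ} (hα0 : 0 < α) (hu : 0 ≤ u) (hua : u ≤ a) :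
    ∫⁻ x in Set.Ioo u a, ENNReal.ofReal ((x - u) ^ (α - 1))
      ≤ ENNReal.ofReal (a ^ α / α) := by
  have hii : IntervalIntegrable (fun x => (x - u) ^ (α - 1)) volume u a := by
    have h1 := (intervalIntegral.intervalIntegrable_rpow' (a := 0) (b := a - u)
      (r := α - 1) (by linarith)).comp_sub_right u
    simpa using h1
  have hInt : IntegrableOn (fun x => (x - u) ^ (α - 1)) (Set.Ioo u a) volume :=
    ((intervalIntegrable_iff_integrableOn_Ioc_of_le hua).1 hii).mono_set Set.Ioo_subset_Ioc_self
  have hnn : 0 ≤ᵐ[volume.restrict (Set.Ioo u a)] fun x => (x - u) ^ (α - 1) := by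
    rw [Filter.EventuallyLE, ae_restrict_iff' measurableSet_Ioo]
    filter_upwards with x hx
    exact Real.rpow_nonneg (by linarith [hx.1]) _
  have hval : ∫ x in Set.Ioo u a, (x - u) ^ (α - 1) = ((a - u) ^ α - 0 ^ α) / α := by
    rw [← MeasureTheory.integral_Ioc_eq_integral_Ioo,
      ← intervalIntegral.integral_of_le hua,
      intervalIntegral.integral_comp_sub_right (fun x => x ^ (α - 1)) u]
    simpa using integral_rpow (a := u - u) (b := a - u) (r := α - 1) (Or.inl (by linarith))
  calc ∫⁻ x in Set.Ioo u a, ENNReal.ofReal ((x - u) ^ (α - 1))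
      = ENNReal.ofReal (∫ x in Set.Ioo u a, (x - u) ^ (α - 1)) :=
        (ofReal_integral_eq_lintegral_ofReal hInt hnn).symm
    _ ≤ ENNReal.ofReal (a ^ α / α) := by
        apply ENNReal.ofReal_le_ofReal
        rw [hval, Real.zero_rpow hα0.ne']
        have : (a - u) ^ α ≤ a ^ α := Real.rpow_le_rpow (by linarith) (by linarith) hα0.le
        have h0 : (0:ℝ) ≤ (a - u) ^ α := Real.rpow_nonneg (by linarith) _
        rw [div_le_div_iff_of_pos_right hα0]  -- maybe wrong name
        linarith

theorem stmt8 (α c : ℝ) (hα0 : 0 < α) (hα1 : α ≤ 1) (f : ℝ → ℂ)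
    (hmeas : Measurable f) (hf : memXloc c f) : memDomJ α c f := by
  have habs : Measurable fun u : ℝ => ‖f u‖ :=
    continuous_norm.measurable.comp hmeas
  set g : ℝ → ENNReal := fun x => ∫⁻ u in Set.Ioo (0:ℝ) x,
      ENNReal.ofReal (u ^ (c - 1) * Real.log (x / u) ^ (α - 1) * ‖f u‖) with hg
  have hFmeas : Measurable fun p : ℝ × ℝ =>
      ENNReal.ofReal (p.2 ^ (c - 1) * Real.log (p.1 / p.2) ^ (α - 1) * ‖f p.2‖) := by
    apply Measurable.ennreal_ofReal
    exact ((measurable_snd.pow_const _).mul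
      ((Real.measurable_log.comp (measurable_fst.div measurable_snd)).pow_const _)).mul
      (habs.comp measurable_snd)
  have hgmeas : Measurable g := by
    have hrw : g = fun x => ∫⁻ u, ({p : ℝ × ℝ | 0 < p.2 ∧ p.2 < p.1}.indicator
        (fun p => ENNReal.ofReal
          (p.2 ^ (c - 1) * Real.log (p.1 / p.2) ^ (α - 1) * ‖f p.2‖)) (x, u)) := by
      funext x
      simp only [hg]
      rw [← lintegral_indicator measurableSet_Ioo]
      congr 1
    rw [hrw]
    exact Measurable.lintegral_prod_right
      (f := fun x u => ({p : ℝ × ℝ | 0 < p.2 ∧ p.2 < p.1}.indicator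
        (fun p => ENNReal.ofReal
          (p.2 ^ (c - 1) * Real.log (p.1 / p.2) ^ (α - 1) * ‖f p.2‖)) (x, u)))
      (hFmeas.indicator ((measurableSet_lt measurable_const measurable_snd).inter
        (measurableSet_lt measurable_snd measurable_fst)))
  have key : ∀ a : ℝ, 0 < a → ∀ᵐ x ∂(volume.restrict (Set.Ioo (0:ℝ) a)), g x < ⊤ := by
    intro a ha
    apply ae_lt_top hgmeas
    set G : ℝ → ENNReal := fun u =>
      ENNReal.ofReal (a ^ (1 - α) * (u ^ (c - 1) * ‖f u‖)) with hG
    set K : ℝ × ℝ → ENNReal := fun p => {q : ℝ × ℝ | q.2 < q.1}.indicator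
        (fun q => G q.2 * ENNReal.ofReal ((q.1 - q.2) ^ (α - 1))) p with hK
    have hGmeas : Measurable G := by
      apply Measurable.ennreal_ofReal
      exact measurable_const.mul ((measurable_id.pow_const _).mul habs)
    have hKmeas : Measurable K := by
      apply Measurable.indicator
      · exact (hGmeas.comp measurable_snd).mul
          (((measurable_fst.sub measurable_snd).pow_const _).ennreal_ofReal)
      · exact measurableSet_lt measurable_snd measurable_fst
    have step1 : ∫⁻ x in Set.Ioo (0:ℝ) a, g x
        ≤ ∫⁻ x in Set.Ioo (0:ℝ) a, ∫⁻ u in Set.Ioo (0:ℝ) a, K (x, u) := by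
      refine setLIntegral_mono' measurableSet_Ioo fun x hx => ?_
      calc g x ≤ ∫⁻ u in Set.Ioo (0:ℝ) x, K (x, u) := by
            rw [hg]
            refine setLIntegral_mono' measurableSet_Ioo fun u hu => ?_
            have hmem : (x, u) ∈ {q : ℝ × ℝ | q.2 < q.1} := hu.2
            simp only [hK, hG]
            rw [Set.indicator_of_mem hmem]
            rw [← ENNReal.ofReal_mul (mul_nonneg (Real.rpow_nonneg ha.le _)
              (mul_nonneg (Real.rpow_nonneg hu.1.le _) (norm_nonneg _)))]
            apply ENNReal.ofReal_le_ofReal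
            have hb : (0:ℝ) ≤ u ^ (c - 1) := Real.rpow_nonneg hu.1.le _
            have hm : (0:ℝ) ≤ ‖f u‖ := norm_nonneg _
            have hkey := log_rpow_bound hα1 hu.1 hu.2 hx.2.le
            calc u ^ (c - 1) * Real.log (x / u) ^ (α - 1) * ‖f u‖
                = (u ^ (c - 1) * ‖f u‖) * Real.log (x / u) ^ (α - 1) := by ring
              _ ≤ (u ^ (c - 1) * ‖f u‖) * (a ^ (1 - α) * (x - u) ^ (α - 1)) :=
                  mul_le_mul_of_nonneg_left hkey (mul_nonneg hb hm)
              _ = a ^ (1 - α) * (u ^ (c - 1) * ‖f u‖) * (x - u) ^ (α - 1) := by ring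
        _ ≤ ∫⁻ u in Set.Ioo (0:ℝ) a, K (x, u) :=
            lintegral_mono_set (Set.Ioo_subset_Ioo_right hx.2.le)
    have step2 : ∫⁻ x in Set.Ioo (0:ℝ) a, ∫⁻ u in Set.Ioo (0:ℝ) a, K (x, u)
        = ∫⁻ u in Set.Ioo (0:ℝ) a, ∫⁻ x in Set.Ioo (0:ℝ) a, K (x, u) :=
      lintegral_lintegral_swap hKmeas.aemeasurable
    have step3 : ∀ u ∈ Set.Ioo (0:ℝ) a,
        ∫⁻ x in Set.Ioo (0:ℝ) a, K (x, u) ≤ G u * ENNReal.ofReal (a ^ α / α) := by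
      intro u hu
      have hrw : (fun x => K (x, u)) = (Set.Ioi u).indicator
          (fun x => G u * ENNReal.ofReal ((x - u) ^ (α - 1))) := by
        funext x
        rw [hK]
        simp [Set.indicator_apply, Set.mem_Ioi]
      have hset : Set.Ioi u ∩ Set.Ioo (0:ℝ) a = Set.Ioo u a := by
        ext y
        simp only [Set.mem_inter_iff, Set.mem_Ioi, Set.mem_Ioo]
        constructor
        · rintro ⟨h1, _, h3⟩; exact ⟨h1, h3⟩
        · rintro ⟨h1, h2⟩; exact ⟨h1, hu.1.trans h1, h2⟩
      calc ∫⁻ x in Set.Ioo (0:ℝ) a, K (x, u)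
          = ∫⁻ x in Set.Ioo (0:ℝ) a, (Set.Ioi u).indicator
              (fun x => G u * ENNReal.ofReal ((x - u) ^ (α - 1))) x := by rw [hrw]
        _ = ∫⁻ x in Set.Ioo u a, G u * ENNReal.ofReal ((x - u) ^ (α - 1)) := by
            rw [lintegral_indicator measurableSet_Ioi,
              Measure.restrict_restrict measurableSet_Ioi, hset]
        _ = G u * ∫⁻ x in Set.Ioo u a, ENNReal.ofReal ((x - u) ^ (α - 1)) := by
            rw [hG]
            exact lintegral_const_mul' _ _ ENNReal.ofReal_ne_top
        _ ≤ G u * ENNReal.ofReal (a ^ α / α) :=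
            mul_le_mul_right (lintegral_rpow_shift_le hα0 hu.1.le hu.2.le) _
    have hGf : ∫⁻ u in Set.Ioo (0:ℝ) a, G u < ⊤ := by
      have hint : IntegrableOn
          (fun u : ℝ => a ^ (1 - α) * (u ^ (c - 1) * ‖f u‖)) (Set.Ioo 0 a) :=
        (hf a ha).const_mul _
      exact hint.lintegral_lt_top
    have final : ∫⁻ x in Set.Ioo (0:ℝ) a, g x
        ≤ (∫⁻ u in Set.Ioo (0:ℝ) a, G u) * ENNReal.ofReal (a ^ α / α) := by
      calc ∫⁻ x in Set.Ioo (0:ℝ) a, g x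
          ≤ ∫⁻ u in Set.Ioo (0:ℝ) a, ∫⁻ x in Set.Ioo (0:ℝ) a, K (x, u) := step2 ▸ step1
        _ ≤ ∫⁻ u in Set.Ioo (0:ℝ) a, G u * ENNReal.ofReal (a ^ α / α) :=
            setLIntegral_mono' measurableSet_Ioo step3
        _ = (∫⁻ u in Set.Ioo (0:ℝ) a, G u) * ENNReal.ofReal (a ^ α / α) :=
            lintegral_mul_const' _ _ ENNReal.ofReal_ne_top
    exact ne_top_of_le_ne_top (ENNReal.mul_ne_top hGf.ne ENNReal.ofReal_ne_top) final
  show ∀ᵐ x ∂(volume.restrict (Set.Ioi (0:ℝ))), g x < ⊤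
  rw [ae_restrict_iff' measurableSet_Ioi]
  have hn : ∀ n : ℕ, ∀ᵐ x ∂(volume : Measure ℝ), x ∈ Set.Ioo (0:ℝ) (n+1) → g x < ⊤ :=
    fun n => (ae_restrict_iff' measurableSet_Ioo).1 (key (n+1) (by positivity))
  filter_upwards [ae_all_iff.2 hn] with x hx hx0
  obtain ⟨n, hn'⟩ := exists_nat_gt x
  exact hx n ⟨hx0, by linarith⟩
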